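/- Let ℓ, r be integers with r ≥ 2 and r+1 ≤ ℓ ≤ 2r−1, and let m be the unique maximizer of f(k) = (k−1)_{r−1}/k^{ℓ−1} over integers k ≥ r. Define h(q) = (q)_{r−1}·(2r − ℓ + 2(m−q)(ℓ−r)) for integers 0 ≤ q ≤ m, where (q)_{r−1} is the falling factorial. Then h(q) < h(m−1) for every integer q ∈ [0, m] with q ≠ m−1. -/

import Mathlib

set_option maxRecDepth 4000 in
set_option maxHeartbeats 2000000 in
theorem key1_aux (s e n : ℕ)
    (hg : 0 ≤ (((s:ℤ)+2*(e:ℤ)+3)*((s:ℤ)+(e:ℤ)+1) - 2*((e:ℤ)+1)*((s:ℤ)+(e:ℤ)+(n:ℤ)+2))) :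
    120*((e:ℤ)+1)*((s:ℤ)+(e:ℤ)+(n:ℤ)+3)^4 ≤ (60*((s:ℤ)+2*(e:ℤ)+3)*((s:ℤ)+2*(e:ℤ)+2)*((s:ℤ)+(e:ℤ)+(n:ℤ)+3)^3 - 20*((s:ℤ)+2*(e:ℤ)+3)*((s:ℤ)+2*(e:ℤ)+2)*((s:ℤ)+2*(e:ℤ)+1)*((s:ℤ)+(e:ℤ)+(n:ℤ)+3)^2 + 5*((s:ℤ)+2*(e:ℤ)+3)*((s:ℤ)+2*(e:ℤ)+2)*((s:ℤ)+2*(e:ℤ)+1)*((s:ℤ)+2*(e:ℤ))*((s:ℤ)+(e:ℤ)+(n:ℤ)+3) - ((s:ℤ)+2*(e:ℤ)+3)*((s:ℤ)+2*(e:ℤ)+2)*((s:ℤ)+2*(e:ℤ)+1)*((s:ℤ)+2*(e:ℤ))*((s:ℤ)+2*(e:ℤ)-1)) := by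
  set P : ℤ := (((Nat.add (Nat.add (Nat.add (Nat.add (Nat.add (Nat.add (Nat.add 918000 (Nat.add (Nat.mul 963000 n) (Nat.mul 336000 (Nat.pow n 2)))) (Nat.add (Nat.add (Nat.mul 39000 (Nat.pow n 3)) (Nat.mul 5909352 e)) (Nat.add (Nat.mul (Nat.mul 5944932 e) n) (Nat.mul (Nat.mul 1986704 e) (Nat.pow n 2))))) (Nat.add (Nat.add (Nat.add (Nat.mul (Nat.mul 220496 e) (Nat.pow n 3)) (Nat.mul 16794652 (Nat.pow e 2))) (Nat.add (Nat.mul (Nat.mul 16029520 (Nat.pow e 2)) n) (Nat.mul (Nat.mul 5072016 (Nat.pow e 2)) (Nat.pow n 2)))) (Nat.add (Nat.add (Nat.mul (Nat.mul 531568 (Nat.pow e 2)) (Nat.pow n 3)) (Nat.mul 27808392 (Nat.pow e 3))) (Nat.add (Nat.mul (Nat.mul 24828264 (Nat.pow e 3)) n) (Nat.mul (Nat.mul 7322944 (Nat.pow e 3)) (Nat.pow n 2)))))) (Nat.add (Nat.add (Nat.add (Nat.mul (Nat.mul 712128 (Nat.pow e 3)) (Nat.pow n 3)) (Nat.add (Nat.mul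 29817448 (Nat.pow e 4)) (Nat.mul (Nat.mul 24450632 (Nat.pow e 4)) n))) (Nat.add (Nat.add (Nat.mul (Nat.mul 6578656 (Nat.pow e 4)) (Nat.pow n 2)) (Nat.mul (Nat.mul 578776 (Nat.pow e 4)) (Nat.pow n 3))) (Nat.add (Nat.mul 21753960 (Nat.pow e 5)) (Nat.mul (Nat.mul 15998180 (Nat.pow e 5)) n)))) (Nat.add (Nat.add (Nat.add (Nat.mul (Nat.mul 3809040 (Nat.pow e 5)) (Nat.pow n 2)) (Nat.mul (Nat.mul 291824 (Nat.pow e 5)) (Nat.pow n 3))) (Nat.add (Nat.mul 11017308 (Nat.pow e 6)) (Nat.mul (Nat.mul 7044336 (Nat.pow e 6)) n))) (Nat.add (Nat.add (Nat.mul (Nat.mul 1419344 (Nat.pow e 6)) (Nat.pow n 2)) (Nat.mul (Nat.mul 88992 (Nat.pow e 6)) (Nat.pow n 3))) (Nat.add (Nat.mul 3860072 (Nat.pow e 7)) (Nat.mul (Nat.mul 2057776 (Nat.pow e 7)) n)))))) (Nat.add (Nat.add (Nat.add (Nat.add (Nat.mul (Nat.mul 326816 (Nat.pow e 7)) (Nat.pow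 n 2)) (Nat.add (Nat.mul (Nat.mul 14912 (Nat.pow e 7)) (Nat.pow n 3)) (Nat.mul 907152 (Nat.pow e 8)))) (Nat.add (Nat.add (Nat.mul (Nat.mul 379168 (Nat.pow e 8)) n) (Nat.mul (Nat.mul 41664 (Nat.pow e 8)) (Nat.pow n 2))) (Nat.add (Nat.mul (Nat.mul 1024 (Nat.pow e 8)) (Nat.pow n 3)) (Nat.mul 132768 (Nat.pow e 9))))) (Nat.add (Nat.add (Nat.add (Nat.mul (Nat.mul 39168 (Nat.pow e 9)) n) (Nat.mul (Nat.mul 2176 (Nat.pow e 9)) (Nat.pow n 2))) (Nat.add (Nat.mul 10240 (Nat.pow e 10)) (Nat.mul (Nat.mul 1664 (Nat.pow e 10)) n))) (Nat.add (Nat.add (Nat.mul 256 (Nat.pow e 11)) (Nat.mul 3808776 s)) (Nat.add (Nat.mul (Nat.mul 3694566 s) n) (Nat.mul (Nat.mul 1185052 s) (Nat.pow n 2)))))) (Nat.add (Nat.add (Nat.add (Nat.add (Nat.mul (Nat.mul 125548 s) (Nat.pow n 3)) (Nat.mul (Nat.mul 22393426 s) e)) (Nat.add (Nat.mul (Nat.mul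 (Nat.mul 20635890 s) e) n) (Nat.mul (Nat.mul (Nat.mul 6271608 s) e) (Nat.pow n 2)))) (Nat.add (Nat.add (Nat.mul (Nat.mul (Nat.mul 627364 s) e) (Nat.pow n 3)) (Nat.mul (Nat.mul 57540602 s) (Nat.pow e 2))) (Nat.add (Nat.mul (Nat.mul (Nat.mul 49714770 s) (Nat.pow e 2)) n) (Nat.mul (Nat.mul (Nat.mul 14106384 s) (Nat.pow e 2)) (Nat.pow n 2))))) (Nat.add (Nat.add (Nat.add (Nat.mul (Nat.mul (Nat.mul 1310164 s) (Nat.pow e 2)) (Nat.pow n 3)) (Nat.mul (Nat.mul 85036706 s) (Nat.pow e 3))) (Nat.add (Nat.mul (Nat.mul (Nat.mul 67696486 s) (Nat.pow e 3)) n) (Nat.mul (Nat.mul (Nat.mul 17569192 s) (Nat.pow e 3)) (Nat.pow n 2)))) (Nat.add (Nat.add (Nat.mul (Nat.mul (Nat.mul 1478428 s) (Nat.pow e 3)) (Nat.pow n 3)) (Nat.mul (Nat.mul 80031222 s) (Nat.pow e 4))) (Nat.add (Nat.mul (Nat.mul (Nat.mul 57362832 s) (Nat.pow e 4)) n) (Nat.mul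 (Nat.mul (Nat.mul 13222884 s) (Nat.pow e 4)) (Nat.pow n 2)))))))) (Nat.add (Nat.add (Nat.add (Nat.add (Nat.add (Nat.mul (Nat.mul (Nat.mul 971120 s) (Nat.pow e 4)) (Nat.pow n 3)) (Nat.add (Nat.mul (Nat.mul 50115780 s) (Nat.pow e 5)) (Nat.mul (Nat.mul (Nat.mul 31355632 s) (Nat.pow e 5)) n))) (Nat.add (Nat.add (Nat.mul (Nat.mul (Nat.mul 6146080 s) (Nat.pow e 5)) (Nat.pow n 2)) (Nat.mul (Nat.mul (Nat.mul 370480 s) (Nat.pow e 5)) (Nat.pow n 3))) (Nat.add (Nat.mul (Nat.mul 21120976 s) (Nat.pow e 6)) (Nat.mul (Nat.mul (Nat.mul 11054352 s) (Nat.pow e 6)) n)))) (Nat.add (Nat.add (Nat.add (Nat.mul (Nat.mul (Nat.mul 1719408 s) (Nat.pow e 6)) (Nat.pow n 2)) (Nat.mul (Nat.mul (Nat.mul 75840 s) (Nat.pow e 6)) (Nat.pow n 3))) (Nat.add (Nat.mul (Nat.mul 5886048 s) (Nat.pow e 7)) (Nat.mul (Nat.mul (Nat.mul 2419920 s) (Nat.pow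 e 7)) n))) (Nat.add (Nat.add (Nat.mul (Nat.mul (Nat.mul 263616 s) (Nat.pow e 7)) (Nat.pow n 2)) (Nat.mul (Nat.mul (Nat.mul 6400 s) (Nat.pow e 7)) (Nat.pow n 3))) (Nat.add (Nat.mul (Nat.mul 1024144 s) (Nat.pow e 8)) (Nat.mul (Nat.mul (Nat.mul 296704 s) (Nat.pow e 8)) n))))) (Nat.add (Nat.add (Nat.add (Nat.mul (Nat.mul (Nat.mul 16768 s) (Nat.pow e 8)) (Nat.pow n 2)) (Nat.add (Nat.mul (Nat.mul 97280 s) (Nat.pow e 9)) (Nat.mul (Nat.mul (Nat.mul 15296 s) (Nat.pow e 9)) n))) (Nat.add (Nat.add (Nat.mul (Nat.mul 3520 s) (Nat.pow e 10)) (Nat.mul 7322080 (Nat.pow s 2))) (Nat.add (Nat.mul (Nat.mul 6521345 (Nat.pow s 2)) n) (Nat.mul (Nat.mul 1907310 (Nat.pow s 2)) (Nat.pow n 2))))) (Nat.add (Nat.add (Nat.add (Nat.mul (Nat.mul 182680 (Nat.pow s 2)) (Nat.pow n 3)) (Nat.mul (Nat.mul 38865703 (Nat.pow s 2)) e)) (Nat.add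 (Nat.mul (Nat.mul (Nat.mul 32500023 (Nat.pow s 2)) e) n) (Nat.mul (Nat.mul (Nat.mul 8880834 (Nat.pow s 2)) e) (Nat.pow n 2)))) (Nat.add (Nat.add (Nat.mul (Nat.mul (Nat.mul 789580 (Nat.pow s 2)) e) (Nat.pow n 3)) (Nat.mul (Nat.mul 89016339 (Nat.pow s 2)) (Nat.pow e 2))) (Nat.add (Nat.mul (Nat.mul (Nat.mul 68743053 (Nat.pow s 2)) (Nat.pow e 2)) n) (Nat.mul (Nat.mul (Nat.mul 17209278 (Nat.pow s 2)) (Nat.pow e 2)) (Nat.pow n 2))))))) (Nat.add (Nat.add (Nat.add (Nat.add (Nat.mul (Nat.mul (Nat.mul 1386920 (Nat.pow s 2)) (Nat.pow e 2)) (Nat.pow n 3)) (Nat.add (Nat.mul (Nat.mul 115356977 (Nat.pow s 2)) (Nat.pow e 3)) (Nat.mul (Nat.mul (Nat.mul 80461261 (Nat.pow s 2)) (Nat.pow e 3)) n))) (Nat.add (Nat.add (Nat.mul (Nat.mul (Nat.mul 17940454 (Nat.pow s 2)) (Nat.pow e 3)) (Nat.pow n 2)) (Nat.mul (Nat.mul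 (Nat.mul 1263660 (Nat.pow s 2)) (Nat.pow e 3)) (Nat.pow n 3))) (Nat.add (Nat.mul (Nat.mul 93162353 (Nat.pow s 2)) (Nat.pow e 4)) (Nat.mul (Nat.mul (Nat.mul 56932066 (Nat.pow s 2)) (Nat.pow e 4)) n)))) (Nat.add (Nat.add (Nat.add (Nat.mul (Nat.mul (Nat.mul 10837940 (Nat.pow s 2)) (Nat.pow e 4)) (Nat.pow n 2)) (Nat.mul (Nat.mul (Nat.mul 628120 (Nat.pow s 2)) (Nat.pow e 4)) (Nat.pow n 3))) (Nat.add (Nat.mul (Nat.mul 48589872 (Nat.pow s 2)) (Nat.pow e 5)) (Nat.mul (Nat.mul (Nat.mul 24924436 (Nat.pow s 2)) (Nat.pow e 5)) n))) (Nat.add (Nat.add (Nat.mul (Nat.mul (Nat.mul 3785432 (Nat.pow s 2)) (Nat.pow e 5)) (Nat.pow n 2)) (Nat.mul (Nat.mul (Nat.mul 161120 (Nat.pow s 2)) (Nat.pow e 5)) (Nat.pow n 3))) (Nat.add (Nat.mul (Nat.mul 16329612 (Nat.pow s 2)) (Nat.pow e 6)) (Nat.mul (Nat.mul (Nat.mul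 6592152 (Nat.pow s 2)) (Nat.pow e 6)) n))))) (Nat.add (Nat.add (Nat.add (Nat.add (Nat.mul (Nat.mul (Nat.mul 706304 (Nat.pow s 2)) (Nat.pow e 6)) (Nat.pow n 2)) (Nat.mul (Nat.mul (Nat.mul 16640 (Nat.pow s 2)) (Nat.pow e 6)) (Nat.pow n 3))) (Nat.add (Nat.mul (Nat.mul 3386616 (Nat.pow s 2)) (Nat.pow e 7)) (Nat.mul (Nat.mul (Nat.mul 961872 (Nat.pow s 2)) (Nat.pow e 7)) n))) (Nat.add (Nat.add (Nat.mul (Nat.mul (Nat.mul 54112 (Nat.pow s 2)) (Nat.pow e 7)) (Nat.pow n 2)) (Nat.mul (Nat.mul 386512 (Nat.pow s 2)) (Nat.pow e 8))) (Nat.add (Nat.mul (Nat.mul (Nat.mul 58976 (Nat.pow s 2)) (Nat.pow e 8)) n) (Nat.mul (Nat.mul 17728 (Nat.pow s 2)) (Nat.pow e 9))))) (Nat.add (Nat.add (Nat.add (Nat.mul 8587980 (Nat.pow s 3)) (Nat.mul (Nat.mul 6954822 (Nat.pow s 3)) n)) (Nat.add (Nat.mul (Nat.mul 1832684 (Nat.pow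 s 3)) (Nat.pow n 2)) (Nat.mul (Nat.mul 156340 (Nat.pow s 3)) (Nat.pow n 3)))) (Nat.add (Nat.add (Nat.mul (Nat.mul 40594998 (Nat.pow s 3)) e) (Nat.mul (Nat.mul (Nat.mul 30407227 (Nat.pow s 3)) e) n)) (Nat.add (Nat.mul (Nat.mul (Nat.mul 7347388 (Nat.pow s 3)) e) (Nat.pow n 2)) (Nat.mul (Nat.mul (Nat.mul 568080 (Nat.pow s 3)) e) (Nat.pow n 3))))))))) (Nat.add (Nat.add (Nat.add (Nat.add (Nat.add (Nat.add (Nat.mul (Nat.mul 81464085 (Nat.pow s 3)) (Nat.pow e 2)) (Nat.add (Nat.mul (Nat.mul (Nat.mul 55243982 (Nat.pow s 3)) (Nat.pow e 2)) n) (Nat.mul (Nat.mul (Nat.mul 11911584 (Nat.pow s 3)) (Nat.pow e 2)) (Nat.pow n 2)))) (Nat.add (Nat.add (Nat.mul (Nat.mul (Nat.mul 805440 (Nat.pow s 3)) (Nat.pow e 2)) (Nat.pow n 3)) (Nat.mul (Nat.mul 90543758 (Nat.pow s 3)) (Nat.pow e 3))) (Nat.add (Nat.mul (Nat.mul (Nat.mul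 53962597 (Nat.pow s 3)) (Nat.pow e 3)) n) (Nat.mul (Nat.mul (Nat.mul 9964580 (Nat.pow s 3)) (Nat.pow e 3)) (Nat.pow n 2))))) (Nat.add (Nat.add (Nat.add (Nat.mul (Nat.mul (Nat.mul 555300 (Nat.pow s 3)) (Nat.pow e 3)) (Nat.pow n 3)) (Nat.mul (Nat.mul 60906859 (Nat.pow s 3)) (Nat.pow e 4))) (Nat.add (Nat.mul (Nat.mul (Nat.mul 30569240 (Nat.pow s 3)) (Nat.pow e 4)) n) (Nat.mul (Nat.mul (Nat.mul 4523220 (Nat.pow s 3)) (Nat.pow e 4)) (Nat.pow n 2)))) (Nat.add (Nat.add (Nat.mul (Nat.mul (Nat.mul 185600 (Nat.pow s 3)) (Nat.pow e 4)) (Nat.pow n 3)) (Nat.mul (Nat.mul 25357636 (Nat.pow s 3)) (Nat.pow e 5))) (Nat.add (Nat.mul (Nat.mul (Nat.mul 10039132 (Nat.pow s 3)) (Nat.pow e 5)) n) (Nat.mul (Nat.mul (Nat.mul 1053760 (Nat.pow s 3)) (Nat.pow e 5)) (Nat.pow n 2)))))) (Nat.add (Nat.add (Nat.add (Nat.mul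 (Nat.mul (Nat.mul 24000 (Nat.pow s 3)) (Nat.pow e 5)) (Nat.pow n 3)) (Nat.add (Nat.mul (Nat.mul 6358892 (Nat.pow s 3)) (Nat.pow e 6)) (Nat.mul (Nat.mul (Nat.mul 1770112 (Nat.pow s 3)) (Nat.pow e 6)) n))) (Nat.add (Nat.add (Nat.mul (Nat.mul (Nat.mul 98240 (Nat.pow s 3)) (Nat.pow e 6)) (Nat.pow n 2)) (Nat.mul (Nat.mul 870016 (Nat.pow s 3)) (Nat.pow e 7))) (Nat.add (Nat.mul (Nat.mul (Nat.mul 129200 (Nat.pow s 3)) (Nat.pow e 7)) n) (Nat.mul (Nat.mul 48592 (Nat.pow s 3)) (Nat.pow e 8))))) (Nat.add (Nat.add (Nat.add (Nat.mul 6816432 (Nat.pow s 4)) (Nat.mul (Nat.mul 4953824 (Nat.pow s 4)) n)) (Nat.add (Nat.mul (Nat.mul 1156470 (Nat.pow s 4)) (Nat.pow n 2)) (Nat.mul (Nat.mul 85940 (Nat.pow s 4)) (Nat.pow n 3)))) (Nat.add (Nat.add (Nat.mul (Nat.mul 28214772 (Nat.pow s 4)) e) (Nat.mul (Nat.mul (Nat.mul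 18595563 (Nat.pow s 4)) e) n)) (Nat.add (Nat.mul (Nat.mul (Nat.mul 3878250 (Nat.pow s 4)) e) (Nat.pow n 2)) (Nat.mul (Nat.mul (Nat.mul 252060 (Nat.pow s 4)) e) (Nat.pow n 3))))))) (Nat.add (Nat.add (Nat.add (Nat.add (Nat.mul (Nat.mul 48536791 (Nat.pow s 4)) (Nat.pow e 2)) (Nat.add (Nat.mul (Nat.mul (Nat.mul 28182119 (Nat.pow s 4)) (Nat.pow e 2)) n) (Nat.mul (Nat.mul (Nat.mul 5044700 (Nat.pow s 4)) (Nat.pow e 2)) (Nat.pow n 2)))) (Nat.add (Nat.add (Nat.mul (Nat.mul (Nat.mul 270440 (Nat.pow s 4)) (Nat.pow e 2)) (Nat.pow n 3)) (Nat.mul (Nat.mul 44921711 (Nat.pow s 4)) (Nat.pow e 3))) (Nat.add (Nat.mul (Nat.mul (Nat.mul 22029190 (Nat.pow s 4)) (Nat.pow e 3)) n) (Nat.mul (Nat.mul (Nat.mul 3170640 (Nat.pow s 4)) (Nat.pow e 3)) (Nat.pow n 2))))) (Nat.add (Nat.add (Nat.add (Nat.mul (Nat.mul (Nat.mul 125380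 (Nat.pow s 4)) (Nat.pow e 3)) (Nat.pow n 3)) (Nat.mul (Nat.mul 24126690 (Nat.pow s 4)) (Nat.pow e 4))) (Nat.add (Nat.mul (Nat.mul (Nat.mul 9356420 (Nat.pow s 4)) (Nat.pow e 4)) n) (Nat.mul (Nat.mul (Nat.mul 959740 (Nat.pow s 4)) (Nat.pow e 4)) (Nat.pow n 2)))) (Nat.add (Nat.add (Nat.mul (Nat.mul (Nat.mul 21120 (Nat.pow s 4)) (Nat.pow e 4)) (Nat.pow n 3)) (Nat.mul (Nat.mul 7504132 (Nat.pow s 4)) (Nat.pow e 5))) (Nat.add (Nat.mul (Nat.mul (Nat.mul 2047256 (Nat.pow s 4)) (Nat.pow e 5)) n) (Nat.mul (Nat.mul (Nat.mul 111640 (Nat.pow s 4)) (Nat.pow e 5)) (Nat.pow n 2)))))) (Nat.add (Nat.add (Nat.add (Nat.add (Nat.mul (Nat.mul 1245256 (Nat.pow s 4)) (Nat.pow e 6)) (Nat.mul (Nat.mul (Nat.mul 180456 (Nat.pow s 4)) (Nat.pow e 6)) n)) (Nat.add (Nat.mul (Nat.mul 83968 (Nat.pow s 4)) (Nat.pow e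 7)) (Nat.mul 3839248 (Nat.pow s 5)))) (Nat.add (Nat.add (Nat.mul (Nat.mul 2459266 (Nat.pow s 5)) n) (Nat.mul (Nat.mul 496388 (Nat.pow s 5)) (Nat.pow n 2))) (Nat.add (Nat.mul (Nat.mul 31052 (Nat.pow s 5)) (Nat.pow n 3)) (Nat.mul (Nat.mul 13617754 (Nat.pow s 5)) e)))) (Nat.add (Nat.add (Nat.add (Nat.mul (Nat.mul (Nat.mul 7698827 (Nat.pow s 5)) e) n) (Nat.mul (Nat.mul (Nat.mul 1335712 (Nat.pow s 5)) e) (Nat.pow n 2))) (Nat.add (Nat.mul (Nat.mul (Nat.mul 68936 (Nat.pow s 5)) e) (Nat.pow n 3)) (Nat.mul (Nat.mul 19500997 (Nat.pow s 5)) (Nat.pow e 2)))) (Nat.add (Nat.add (Nat.mul (Nat.mul (Nat.mul 9333818 (Nat.pow s 5)) (Nat.pow e 2)) n) (Nat.mul (Nat.mul (Nat.mul 1305448 (Nat.pow s 5)) (Nat.pow e 2)) (Nat.pow n 2))) (Nat.add (Nat.mul (Nat.mul (Nat.mul 49756 (Nat.pow s 5)) (Nat.pow e 2)) (Nat.pow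 n 3)) (Nat.mul (Nat.mul 14408746 (Nat.pow s 5)) (Nat.pow e 3)))))))) (Nat.add (Nat.add (Nat.add (Nat.add (Nat.add (Nat.mul (Nat.mul (Nat.mul 5467444 (Nat.pow s 5)) (Nat.pow e 3)) n) (Nat.add (Nat.mul (Nat.mul (Nat.mul 547092 (Nat.pow s 5)) (Nat.pow e 3)) (Nat.pow n 2)) (Nat.mul (Nat.mul (Nat.mul 11632 (Nat.pow s 5)) (Nat.pow e 3)) (Nat.pow n 3)))) (Nat.add (Nat.add (Nat.mul (Nat.mul 5783564 (Nat.pow s 5)) (Nat.pow e 4)) (Nat.mul (Nat.mul (Nat.mul 1546024 (Nat.pow s 5)) (Nat.pow e 4)) n)) (Nat.add (Nat.mul (Nat.mul (Nat.mul 82648 (Nat.pow s 5)) (Nat.pow e 4)) (Nat.pow n 2)) (Nat.mul (Nat.mul 1192152 (Nat.pow s 5)) (Nat.pow e 5))))) (Nat.add (Nat.add (Nat.add (Nat.mul (Nat.mul (Nat.mul 168932 (Nat.pow s 5)) (Nat.pow e 5)) n) (Nat.mul (Nat.mul 97876 (Nat.pow s 5)) (Nat.pow e 6))) (Nat.add (Nat.mul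 1563984 (Nat.pow s 6)) (Nat.mul (Nat.mul 860750 (Nat.pow s 6)) n))) (Nat.add (Nat.add (Nat.mul (Nat.mul 144770 (Nat.pow s 6)) (Nat.pow n 2)) (Nat.mul (Nat.mul 7200 (Nat.pow s 6)) (Nat.pow n 3))) (Nat.add (Nat.mul (Nat.mul 4616870 (Nat.pow s 6)) e) (Nat.mul (Nat.mul (Nat.mul 2155281 (Nat.pow s 6)) e) n))))) (Nat.add (Nat.add (Nat.add (Nat.mul (Nat.mul (Nat.mul 292774 (Nat.pow s 6)) e) (Nat.pow n 2)) (Nat.add (Nat.mul (Nat.mul (Nat.mul 10760 (Nat.pow s 6)) e) (Nat.pow n 3)) (Nat.mul (Nat.mul 5277189 (Nat.pow s 6)) (Nat.pow e 2)))) (Nat.add (Nat.add (Nat.mul (Nat.mul (Nat.mul 1957495 (Nat.pow s 6)) (Nat.pow e 2)) n) (Nat.mul (Nat.mul (Nat.mul 190838 (Nat.pow s 6)) (Nat.pow e 2)) (Nat.pow n 2))) (Nat.add (Nat.mul (Nat.mul (Nat.mul 3920 (Nat.pow s 6)) (Nat.pow e 2)) (Nat.pow n 3)) (Nat.mul (Nat.mul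 2914147 (Nat.pow s 6)) (Nat.pow e 3))))) (Nat.add (Nat.add (Nat.add (Nat.mul (Nat.mul (Nat.mul 762917 (Nat.pow s 6)) (Nat.pow e 3)) n) (Nat.mul (Nat.mul (Nat.mul 39914 (Nat.pow s 6)) (Nat.pow e 3)) (Nat.pow n 2))) (Nat.add (Nat.mul (Nat.mul 775685 (Nat.pow s 6)) (Nat.pow e 4)) (Nat.mul (Nat.mul (Nat.mul 107618 (Nat.pow s 6)) (Nat.pow e 4)) n))) (Nat.add (Nat.add (Nat.mul (Nat.mul 79268 (Nat.pow s 6)) (Nat.pow e 5)) (Nat.mul 460296 (Nat.pow s 7))) (Nat.add (Nat.mul (Nat.mul 209498 (Nat.pow s 7)) n) (Nat.mul (Nat.mul 27636 (Nat.pow s 7)) (Nat.pow n 2))))))) (Nat.add (Nat.add (Nat.add (Nat.add (Nat.mul (Nat.mul 980 (Nat.pow s 7)) (Nat.pow n 3)) (Nat.add (Nat.mul (Nat.mul 1084426 (Nat.pow s 7)) e) (Nat.mul (Nat.mul (Nat.mul 392941 (Nat.pow s 7)) e) n))) (Nat.add (Nat.add (Nat.mul (Nat.mul (Nat.mul 37292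 (Nat.pow s 7)) e) (Nat.pow n 2)) (Nat.mul (Nat.mul (Nat.mul 740 (Nat.pow s 7)) e) (Nat.pow n 3))) (Nat.add (Nat.mul (Nat.mul 926323 (Nat.pow s 7)) (Nat.pow e 2)) (Nat.mul (Nat.mul (Nat.mul 237366 (Nat.pow s 7)) (Nat.pow e 2)) n)))) (Nat.add (Nat.add (Nat.add (Nat.mul (Nat.mul (Nat.mul 12136 (Nat.pow s 7)) (Nat.pow e 2)) (Nat.pow n 2)) (Nat.mul (Nat.mul 339286 (Nat.pow s 7)) (Nat.pow e 3))) (Nat.add (Nat.mul (Nat.mul (Nat.mul 46113 (Nat.pow s 7)) (Nat.pow e 3)) n) (Nat.mul (Nat.mul 44819 (Nat.pow s 7)) (Nat.pow e 4)))) (Nat.add (Nat.add (Nat.mul 95808 (Nat.pow s 8)) (Nat.mul (Nat.mul 33896 (Nat.pow s 8)) n)) (Nat.add (Nat.mul (Nat.mul 3130 (Nat.pow s 8)) (Nat.pow n 2)) (Nat.mul (Nat.mul 60 (Nat.pow s 8)) (Nat.pow n 3)))))) (Nat.add (Nat.add (Nat.add (Nat.add (Nat.mul (Nat.mul 168676 (Nat.pow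 s 8)) e) (Nat.mul (Nat.mul (Nat.mul 42281 (Nat.pow s 8)) e) n)) (Nat.add (Nat.mul (Nat.mul (Nat.mul 2110 (Nat.pow s 8)) e) (Nat.pow n 2)) (Nat.mul (Nat.mul 95573 (Nat.pow s 8)) (Nat.pow e 2)))) (Nat.add (Nat.add (Nat.mul (Nat.mul (Nat.mul 12725 (Nat.pow s 8)) (Nat.pow e 2)) n) (Nat.mul (Nat.mul 17381 (Nat.pow s 8)) (Nat.pow e 3))) (Nat.add (Nat.mul 13416 (Nat.pow s 9)) (Nat.mul (Nat.mul 3288 (Nat.pow s 9)) n)))) (Nat.add (Nat.add (Nat.add (Nat.mul (Nat.mul 160 (Nat.pow s 9)) (Nat.pow n 2)) (Nat.mul (Nat.mul 15668 (Nat.pow s 9)) e)) (Nat.add (Nat.mul (Nat.mul (Nat.mul 2043 (Nat.pow s 9)) e) n) (Nat.mul (Nat.mul 4409 (Nat.pow s 9)) (Nat.pow e 2)))) (Nat.add (Nat.add (Nat.mul 1136 (Nat.pow s 10)) (Nat.mul (Nat.mul 145 (Nat.pow s 10)) n)) (Nat.add (Nat.mul (Nat.mul 659 (Nat.pow s 10))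 e) (Nat.mul 44 (Nat.pow s 11)))))))))) : ℕ) : ℤ) with hPdef
  set T : ℤ := (((Nat.add (Nat.add (Nat.add (Nat.add (Nat.add 375 (Nat.mul 2624 e)) (Nat.add (Nat.mul 7642 (Nat.pow e 2)) (Nat.add (Nat.mul 12132 (Nat.pow e 3)) (Nat.mul 11479 (Nat.pow e 4))))) (Nat.add (Nat.add (Nat.mul 6596 (Nat.pow e 5)) (Nat.add (Nat.mul 2208 (Nat.pow e 6)) (Nat.mul 368 (Nat.pow e 7)))) (Nat.add (Nat.mul 16 (Nat.pow e 8)) (Nat.add (Nat.mul 1387 s) (Nat.mul (Nat.mul 8341 s) e))))) (Nat.add (Nat.add (Nat.add (Nat.mul (Nat.mul 20641 s) (Nat.pow e 2)) (Nat.mul (Nat.mul 27187 s) (Nat.pow e 3))) (Nat.add (Nat.mul (Nat.mul 20480 s) (Nat.pow e 4)) (Nat.add (Nat.mul (Nat.mul 8740 s) (Nat.pow e 5)) (Nat.mul (Nat.mul 1920 s) (Nat.pow e 6))))) (Nat.add (Nat.add (Nat.mul (Nat.mul 160 s) (Nat.pow e 7)) (Nat.add (Nat.mul 2170 (Nat.pow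 s 2)) (Nat.mul (Nat.mul 11095 (Nat.pow s 2)) e))) (Nat.add (Nat.mul (Nat.mul 22820 (Nat.pow s 2)) (Nat.pow e 2)) (Nat.add (Nat.mul (Nat.mul 24075 (Nat.pow s 2)) (Nat.pow e 3)) (Nat.mul (Nat.mul 13660 (Nat.pow s 2)) (Nat.pow e 4))))))) (Nat.add (Nat.add (Nat.add (Nat.add (Nat.mul (Nat.mul 3920 (Nat.pow s 2)) (Nat.pow e 5)) (Nat.mul (Nat.mul 440 (Nat.pow s 2)) (Nat.pow e 6))) (Nat.add (Nat.mul 1885 (Nat.pow s 3)) (Nat.add (Nat.mul (Nat.mul 8040 (Nat.pow s 3)) e) (Nat.mul (Nat.mul 13320 (Nat.pow s 3)) (Nat.pow e 2))))) (Nat.add (Nat.add (Nat.mul (Nat.mul 10665 (Nat.pow s 3)) (Nat.pow e 3)) (Nat.add (Nat.mul (Nat.mul 4100 (Nat.pow s 3)) (Nat.pow e 4)) (Nat.mul (Nat.mul 600 (Nat.pow s 3)) (Nat.pow e 5)))) (Nat.add (Nat.mul 995 (Nat.pow s 4)) (Nat.add (Nat.mul (Nat.mul 3435 (Nat.pow s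 4)) e) (Nat.mul (Nat.mul 4340 (Nat.pow s 4)) (Nat.pow e 2)))))) (Nat.add (Nat.add (Nat.add (Nat.mul (Nat.mul 2365 (Nat.pow s 4)) (Nat.pow e 3)) (Nat.mul (Nat.mul 465 (Nat.pow s 4)) (Nat.pow e 4))) (Nat.add (Nat.mul 323 (Nat.pow s 5)) (Nat.add (Nat.mul (Nat.mul 854 (Nat.pow s 5)) e) (Nat.mul (Nat.mul 739 (Nat.pow s 5)) (Nat.pow e 2))))) (Nat.add (Nat.add (Nat.mul (Nat.mul 208 (Nat.pow s 5)) (Nat.pow e 3)) (Nat.add (Nat.mul 60 (Nat.pow s 6)) (Nat.mul (Nat.mul 110 (Nat.pow s 6)) e))) (Nat.add (Nat.mul (Nat.mul 50 (Nat.pow s 6)) (Nat.pow e 2)) (Nat.add (Nat.mul 5 (Nat.pow s 7)) (Nat.mul (Nat.mul 5 (Nat.pow s 7)) e))))))) : ℕ) : ℤ) with hTdef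
  have hP : (0:ℤ) ≤ P := Int.natCast_nonneg _
  have hT : (0:ℤ) ≤ T := Int.natCast_nonneg _
  have hA : (0:ℤ) < ((s:ℤ)+2*(e:ℤ)+3)*((s:ℤ)+(e:ℤ)+1) + 2*((e:ℤ)+1) := by positivity
  have h1 : (0:ℤ) ≤ (((s:ℤ)+2*(e:ℤ)+3)*((s:ℤ)+(e:ℤ)+1) - 2*((e:ℤ)+1)*((s:ℤ)+(e:ℤ)+(n:ℤ)+2)) * P + 8*((e:ℤ)+1)*((s:ℤ)+(e:ℤ)+(n:ℤ)+3)^4 * T := by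
    have h2 : (0:ℤ) ≤ 8*((e:ℤ)+1)*((s:ℤ)+(e:ℤ)+(n:ℤ)+3)^4 * T :=
      mul_nonneg (by positivity) hT
    have h3 := mul_nonneg hg hP
    linarith
  have hid : (((s:ℤ)+2*(e:ℤ)+3)*((s:ℤ)+(e:ℤ)+1) - 2*((e:ℤ)+1)*((s:ℤ)+(e:ℤ)+(n:ℤ)+2)) * P + 8*((e:ℤ)+1)*((s:ℤ)+(e:ℤ)+(n:ℤ)+3)^4 * T
      = (((s:ℤ)+2*(e:ℤ)+3)*((s:ℤ)+(e:ℤ)+1) + 2*((e:ℤ)+1))^4 *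
        ( (60*((s:ℤ)+2*(e:ℤ)+3)*((s:ℤ)+2*(e:ℤ)+2)*((s:ℤ)+(e:ℤ)+(n:ℤ)+3)^3 - 20*((s:ℤ)+2*(e:ℤ)+3)*((s:ℤ)+2*(e:ℤ)+2)*((s:ℤ)+2*(e:ℤ)+1)*((s:ℤ)+(e:ℤ)+(n:ℤ)+3)^2 + 5*((s:ℤ)+2*(e:ℤ)+3)*((s:ℤ)+2*(e:ℤ)+2)*((s:ℤ)+2*(e:ℤ)+1)*((s:ℤ)+2*(e:ℤ))*((s:ℤ)+(e:ℤ)+(n:ℤ)+3) - ((s:ℤ)+2*(e:ℤ)+3)*((s:ℤ)+2*(e:ℤ)+2)*((s:ℤ)+2*(e:ℤ)+1)*((s:ℤ)+2*(e:ℤ))*((s:ℤ)+2*(e:ℤ)-1)) - 120*((e:ℤ)+1)*((s:ℤ)+(e:ℤ)+(n:ℤ)+3)^4 ) := by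
    rw [hPdef, hTdef]
    simp only [Nat.add_eq, Nat.mul_eq, Nat.pow_eq]
    push_cast
    ring
  rw [hid] at h1
  have h4 := (mul_nonneg_iff_of_pos_left (pow_pos hA 4)).mp h1
  linarith


theorem binom_ladder (n : ℕ) (x : ℝ) (h0 : 0 ≤ x) (h1 : x ≤ 1) :
    ((1-x)^n ≤ 1) ∧
    (1 - n*x ≤ (1-x)^n) ∧
    ((1-x)^n ≤ 1 - n*x + n*(n-1)/2*x^2) ∧
    (1 - n*x + n*(n-1)/2*x^2 - n*(n-1)*(n-2)/6*x^3 ≤ (1-x)^n) ∧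
    ((1-x)^n ≤ 1 - n*x + n*(n-1)/2*x^2 - n*(n-1)*(n-2)/6*x^3 + n*(n-1)*(n-2)*(n-3)/24*x^4) ∧
    (1 - n*x + n*(n-1)/2*x^2 - n*(n-1)*(n-2)/6*x^3 + n*(n-1)*(n-2)*(n-3)/24*x^4
      - n*(n-1)*(n-2)*(n-3)*(n-4)/120*x^5 ≤ (1-x)^n) := by
  induction n with
  | zero => norm_num
  | succ n ih =>
    obtain ⟨i0, i1, i2, i3, i4, i5⟩ := ih
    have hx : 0 ≤ 1 - x := by linarith
    have hp : 0 ≤ (1-x)^n := pow_nonneg hx n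
    have he : (1-x)^(n+1) = (1-x)^n - x*(1-x)^n := by ring
    have m0 := mul_le_mul_of_nonneg_left i0 h0
    have m1 := mul_le_mul_of_nonneg_left i1 h0
    have m2 := mul_le_mul_of_nonneg_left i2 h0
    have m3 := mul_le_mul_of_nonneg_left i3 h0
    have m4 := mul_le_mul_of_nonneg_left i4 h0
    have hxp : 0 ≤ x*(1-x)^n := mul_nonneg h0 hp
    push_cast
    refine ⟨by linarith [he, hxp, i0], by linarith [he, i1, m0], by linarith [he, i2, m1],
      by linarith [he, i3, m2], by linarith [he, i4, m3], by linarith [he, i5, m4]⟩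

set_option maxHeartbeats 1000000 in
/-- For `r + 1 ≤ ℓ ≤ 2r − 1` and `m` the unique maximizer of `f`, the function
`h(q) = (q)_{r−1}·(2r − ℓ + 2(m−q)(ℓ−r))` satisfies `h(q) < h(m−1)` for all `q ≤ m`,
`q ≠ m − 1`. -/
theorem h_max_at_m_sub_one (r ℓ m : ℕ) (hr : 2 ≤ r) (hℓ1 : r + 1 ≤ ℓ) (hℓ2 : ℓ ≤ 2 * r - 1)
    (f : ℕ → ℝ)
    (hf : ∀ k, f k = (∏ i ∈ Finset.range (r - 1), ((k : ℝ) - (i + 1))) / (k : ℝ) ^ (ℓ - 1))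
    (hm : r ≤ m ∧ ∀ k, r ≤ k → k ≠ m → f k < f m)
    (h : ℕ → ℤ)
    (hh : ∀ q, h q = (Nat.descFactorial q (r - 1) : ℤ) *
        (2 * (r : ℤ) - (ℓ : ℤ) + 2 * ((m : ℤ) - (q : ℤ)) * ((ℓ : ℤ) - (r : ℤ)))) :
    ∀ q : ℕ, q ≤ m → q ≠ m - 1 → h q < h (m - 1) := by
  obtain ⟨hrm, hmax⟩ := hm
  have hℓ3 : 3 ≤ ℓ := by omega
  have hmr2 : 2 ≤ m := by omega
  have hmR : (2:ℝ) ≤ (m:ℝ) := by exact_mod_cast hmr2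
  have hrR : (2:ℝ) ≤ (r:ℝ) := by exact_mod_cast hr
  have hrmR : (r:ℝ) ≤ (m:ℝ) := by exact_mod_cast hrm
  have hℓR1 : (r:ℝ) + 1 ≤ (ℓ:ℝ) := by exact_mod_cast hℓ1
  have hℓR2 : (ℓ:ℝ) ≤ 2*(r:ℝ) - 1 := by
    have : (ℓ:ℤ) ≤ 2*(r:ℤ)-1 := by omega
    exact_mod_cast this
  -- ============ STEP A : real ineq from f (m+1) < f m ============
  have hA : ((m:ℝ))^ℓ < ((m:ℝ)+1)^(ℓ-1) * ((m:ℝ)-(r:ℝ)+1) := by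
    have h1 := hmax (m+1) (by omega) (by omega)
    rw [hf, hf] at h1
    have e1 : (∏ i ∈ Finset.range (r-1), (((m+1:ℕ):ℝ) - ((i:ℝ) + 1)))
        = (∏ i ∈ Finset.range (r-2), ((m:ℝ) - ((i:ℝ)+1))) * (m:ℝ) := by
      rw [show r-1 = (r-2)+1 by omega, Finset.prod_range_succ']
      push_cast
      congr 1
      · exact Finset.prod_congr rfl (fun i _ => by ring)
      · ring
    have e2 : (∏ i ∈ Finset.range (r-1), ((m:ℝ) - ((i:ℝ) + 1)))
        = (∏ i ∈ Finset.range (r-2), ((m:ℝ) - ((i:ℝ)+1))) * ((m:ℝ) - (r:ℝ) + 1) := by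
      rw [show r-1 = (r-2)+1 by omega, Finset.prod_range_succ]
      congr 1
      have : ((r-2:ℕ):ℝ) = (r:ℝ) - 2 := by
        have : ((r-2:ℕ):ℤ) = (r:ℤ) - 2 := by omega
        exact_mod_cast this
      rw [this]; ring
    rw [e1, e2] at h1
    have hAq : 0 < ∏ i ∈ Finset.range (r-2), ((m:ℝ) - ((i:ℝ)+1)) := by
      apply Finset.prod_pos
      intro i hi
      have hi2 : i + 2 ≤ m := by
        have := Finset.mem_range.mp hi; omega
      have : (i:ℝ) + 2 ≤ (m:ℝ) := by exact_mod_cast hi2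
      linarith
    have hc1 : ((m+1:ℕ):ℝ) = (m:ℝ)+1 := by push_cast; ring
    rw [hc1] at h1
    rw [div_lt_div_iff₀ (by positivity) (by positivity)] at h1
    have hml : (m:ℝ)^(ℓ-1) * (m:ℝ) = (m:ℝ)^ℓ := by
      rw [← pow_succ]; congr 1; omega
    nlinarith [h1, hAq, hml]
  -- ============ STEP A' : quintic bound gives integer inequality ============
  have hWZ : 60*(ℓ:ℤ)*((ℓ:ℤ)-1)*((m:ℤ)+1)^3
      - 20*(ℓ:ℤ)*((ℓ:ℤ)-1)*((ℓ:ℤ)-2)*((m:ℤ)+1)^2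
      + 5*(ℓ:ℤ)*((ℓ:ℤ)-1)*((ℓ:ℤ)-2)*((ℓ:ℤ)-3)*((m:ℤ)+1)
      - (ℓ:ℤ)*((ℓ:ℤ)-1)*((ℓ:ℤ)-2)*((ℓ:ℤ)-3)*((ℓ:ℤ)-4)
      < 120*((ℓ:ℤ)-(r:ℤ))*((m:ℤ)+1)^4 := by
    set t : ℝ := (m:ℝ)+1 with htdef
    have ht0 : (0:ℝ) < t := by rw [htdef]; positivity
    set x : ℝ := 1/t with hxdef
    have hx0 : (0:ℝ) < x := by rw [hxdef]; positivity
    have hx1 : x ≤ 1 := by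
      rw [hxdef]; rw [div_le_one ht0]; rw [htdef]; linarith
    have hxt : x * t = 1 := by rw [hxdef]; field_simp
    -- (1-x)^ℓ < 1 - r x
    have h2 : (1-x)^ℓ < 1 - (r:ℝ)*x := by
      have e1 : 1 - x = (m:ℝ)/t := by rw [hxdef, htdef]; field_simp; ring
      have e2 : 1 - (r:ℝ)*x = (t - (r:ℝ))/t := by rw [hxdef]; field_simp
      rw [e1, e2, div_pow, div_lt_div_iff₀ (by positivity) ht0]
      have hpow : t^(ℓ-1) * t = t^ℓ := by rw [← pow_succ]; congr 1; omega
      have h3 := mul_lt_mul_of_pos_right hA ht0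
      rw [htdef] at *
      nlinarith [h3, hpow]
    obtain ⟨-, -, -, -, -, q5⟩ := binom_ladder ℓ x (le_of_lt hx0) hx1
    have h4 : 1 - (ℓ:ℝ)*x + (ℓ:ℝ)*((ℓ:ℝ)-1)/2*x^2 - (ℓ:ℝ)*((ℓ:ℝ)-1)*((ℓ:ℝ)-2)/6*x^3
        + (ℓ:ℝ)*((ℓ:ℝ)-1)*((ℓ:ℝ)-2)*((ℓ:ℝ)-3)/24*x^4
        - (ℓ:ℝ)*((ℓ:ℝ)-1)*((ℓ:ℝ)-2)*((ℓ:ℝ)-3)*((ℓ:ℝ)-4)/120*x^5 < 1 - (r:ℝ)*x :=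
      lt_of_le_of_lt q5 h2
    have h6' : x*((ℓ:ℝ)*((ℓ:ℝ)-1)/2*x - (ℓ:ℝ)*((ℓ:ℝ)-1)*((ℓ:ℝ)-2)/6*x^2
        + (ℓ:ℝ)*((ℓ:ℝ)-1)*((ℓ:ℝ)-2)*((ℓ:ℝ)-3)/24*x^3
        - (ℓ:ℝ)*((ℓ:ℝ)-1)*((ℓ:ℝ)-2)*((ℓ:ℝ)-3)*((ℓ:ℝ)-4)/120*x^4)
        < x*((ℓ:ℝ) - (r:ℝ)) := by nlinarith [h4]
    have h6 := (mul_lt_mul_iff_right₀ hx0).mp h6'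
    have h7 := mul_lt_mul_of_pos_right h6 (pow_pos ht0 4)
    have e3 : ((ℓ:ℝ)*((ℓ:ℝ)-1)/2*x - (ℓ:ℝ)*((ℓ:ℝ)-1)*((ℓ:ℝ)-2)/6*x^2
        + (ℓ:ℝ)*((ℓ:ℝ)-1)*((ℓ:ℝ)-2)*((ℓ:ℝ)-3)/24*x^3
        - (ℓ:ℝ)*((ℓ:ℝ)-1)*((ℓ:ℝ)-2)*((ℓ:ℝ)-3)*((ℓ:ℝ)-4)/120*x^4) * t^4
        = (ℓ:ℝ)*((ℓ:ℝ)-1)/2*t^3 - (ℓ:ℝ)*((ℓ:ℝ)-1)*((ℓ:ℝ)-2)/6*t^2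
        + (ℓ:ℝ)*((ℓ:ℝ)-1)*((ℓ:ℝ)-2)*((ℓ:ℝ)-3)/24*t
        - (ℓ:ℝ)*((ℓ:ℝ)-1)*((ℓ:ℝ)-2)*((ℓ:ℝ)-3)*((ℓ:ℝ)-4)/120 := by
      rw [hxdef]; field_simp
    rw [e3] at h7
    have hWR : 60*(ℓ:ℝ)*((ℓ:ℝ)-1)*((m:ℝ)+1)^3
        - 20*(ℓ:ℝ)*((ℓ:ℝ)-1)*((ℓ:ℝ)-2)*((m:ℝ)+1)^2
        + 5*(ℓ:ℝ)*((ℓ:ℝ)-1)*((ℓ:ℝ)-2)*((ℓ:ℝ)-3)*((m:ℝ)+1)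
        - (ℓ:ℝ)*((ℓ:ℝ)-1)*((ℓ:ℝ)-2)*((ℓ:ℝ)-3)*((ℓ:ℝ)-4)
        < 120*((ℓ:ℝ)-(r:ℝ))*((m:ℝ)+1)^4 := by
      rw [htdef] at h7; linarith [h7]
    exact_mod_cast hWR
  -- ============ KEY 1 ============
  have key1 : (ℓ:ℤ)*((r:ℤ)-1) < 2*((ℓ:ℤ)-(r:ℤ))*(m:ℤ) := by
    by_contra hG
    push_neg at hG
    obtain ⟨e, he⟩ : ∃ e, ℓ = r + 1 + e := ⟨ℓ - (r+1), by omega⟩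
    subst he
    obtain ⟨s, hs⟩ : ∃ s, r = e + 2 + s := ⟨r - (e+2), by omega⟩
    subst hs
    obtain ⟨n, hn⟩ : ∃ n, m = (e + 2 + s) + n := ⟨m - (e+2+s), by omega⟩
    subst hn
    push_cast at hWZ hG
    have hg : 0 ≤ (((s:ℤ)+2*(e:ℤ)+3)*((s:ℤ)+(e:ℤ)+1)
        - 2*((e:ℤ)+1)*((s:ℤ)+(e:ℤ)+(n:ℤ)+2)) := by linarith
    have := key1_aux s e n hg
    linarith [this, hWZ]
  -- ============ KEY 2 ============
  have key2 : 2*((ℓ:ℤ)-(r:ℤ))*(m:ℤ) < (ℓ:ℤ)*((ℓ:ℤ)-1) := by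
    by_cases hmr : m = r
    · subst hmr
      have h1 : (1:ℤ) ≤ (ℓ:ℤ) - (m:ℤ) := by omega
      have h2 : (ℓ:ℤ) ≤ 2*(m:ℤ) - 1 := by omega
      nlinarith [sq_nonneg ((m:ℤ)-1), h1, h2]
    · -- m ≥ r + 1 : use f (m-1) < f m
      have hmr1 : r + 1 ≤ m := by omega
      have hB : ((m:ℝ)-(r:ℝ)) * (m:ℝ)^(ℓ-1) < ((m:ℝ)-1)^ℓ := by
        have h1 := hmax (m-1) (by omega) (by omega)
        rw [hf, hf] at h1
        have hc1 : ((m-1:ℕ):ℝ) = (m:ℝ)-1 := by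
          have : ((m-1:ℕ):ℤ) = (m:ℤ)-1 := by omega
          exact_mod_cast this
        simp only [hc1] at h1
        have e1 : (∏ i ∈ Finset.range (r-1), ((m:ℝ) - 1 - ((i:ℝ) + 1)))
            = (∏ i ∈ Finset.range (r-2), ((m:ℝ) - 1 - ((i:ℝ)+1))) * ((m:ℝ) - (r:ℝ)) := by
          rw [show r-1 = (r-2)+1 by omega, Finset.prod_range_succ]
          congr 1
          have : ((r-2:ℕ):ℝ) = (r:ℝ) - 2 := by
            have : ((r-2:ℕ):ℤ) = (r:ℤ) - 2 := by omega
            exact_mod_cast this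
          rw [this]; ring
        have e2 : (∏ i ∈ Finset.range (r-1), ((m:ℝ) - ((i:ℝ) + 1)))
            = (∏ i ∈ Finset.range (r-2), ((m:ℝ) - 1 - ((i:ℝ)+1))) * ((m:ℝ) - 1) := by
          rw [show r-1 = (r-2)+1 by omega, Finset.prod_range_succ']
          push_cast
          congr 1
          · exact Finset.prod_congr rfl (fun i _ => by ring)
          · ring
        rw [e1, e2] at h1
        have hCq : 0 < ∏ i ∈ Finset.range (r-2), ((m:ℝ) - 1 - ((i:ℝ)+1)) := by
          apply Finset.prod_pos
          intro i hi
          have hi2 : i + 3 ≤ m := by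
            have := Finset.mem_range.mp hi; omega
          have : (i:ℝ) + 3 ≤ (m:ℝ) := by exact_mod_cast hi2
          linarith
        have hm1pos : (0:ℝ) < (m:ℝ)-1 := by linarith
        rw [div_lt_div_iff₀ (pow_pos hm1pos _) (by positivity)] at h1
        have hml : ((m:ℝ)-1)^(ℓ-1) * ((m:ℝ)-1) = ((m:ℝ)-1)^ℓ := by
          rw [← pow_succ]; congr 1; omega
        nlinarith [h1, hCq, hml]
      -- quadratic upper bound
      set x : ℝ := 1/(m:ℝ) with hxdef
      have hm0 : (0:ℝ) < (m:ℝ) := by linarith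
      have hx0 : (0:ℝ) < x := by rw [hxdef]; positivity
      have hx1 : x ≤ 1 := by rw [hxdef, div_le_one hm0]; linarith
      obtain ⟨-, -, q2, -, -, -⟩ := binom_ladder ℓ x (le_of_lt hx0) hx1
      have hq2' := mul_le_mul_of_nonneg_right q2 (le_of_lt (pow_pos hm0 ℓ))
      have e1 : (1-x)^ℓ * (m:ℝ)^ℓ = ((m:ℝ)-1)^ℓ := by
        rw [← mul_pow]; congr 1; rw [hxdef]; field_simp
      have p1 : (m:ℝ)^ℓ = (m:ℝ)^(ℓ-2) * (m:ℝ) * (m:ℝ) := by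
        rw [mul_assoc, ← pow_two, ← pow_add]; congr 1; omega
      have p2 : (m:ℝ)^(ℓ-1) = (m:ℝ)^(ℓ-2) * (m:ℝ) := by
        rw [← pow_succ]; congr 1; omega
      have e2 : (1 - (ℓ:ℝ)*x + (ℓ:ℝ)*((ℓ:ℝ)-1)/2*x^2) * (m:ℝ)^ℓ
          = (m:ℝ)^(ℓ-2)*((m:ℝ)*(m:ℝ) - (ℓ:ℝ)*(m:ℝ) + (ℓ:ℝ)*((ℓ:ℝ)-1)/2) := by
        rw [p1, hxdef]; field_simp
      rw [e1, e2] at hq2'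
      have hu : (0:ℝ) < (m:ℝ)^(ℓ-2) := pow_pos hm0 _
      have hcomb : ((m:ℝ)-(r:ℝ)) * ((m:ℝ)^(ℓ-2)*(m:ℝ))
          < (m:ℝ)^(ℓ-2)*((m:ℝ)*(m:ℝ) - (ℓ:ℝ)*(m:ℝ) + (ℓ:ℝ)*((ℓ:ℝ)-1)/2) := by
        rw [← p2]; linarith [hB, hq2']
      have hfin : 2*((ℓ:ℝ)-(r:ℝ))*(m:ℝ) < (ℓ:ℝ)*((ℓ:ℝ)-1) := by
        nlinarith [hcomb, hu]
      exact_mod_cast hfin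
  -- ============ INTEGER ENDGAME ============
  have hcast1 : ((m-1:ℕ):ℤ) = (m:ℤ)-1 := by omega
  have hhm1 : h (m-1) = (Nat.descFactorial (m-1) (r-1) : ℤ) * (ℓ:ℤ) := by
    rw [hh]
    rw [hcast1]
    ring
  have hdpos : (0:ℤ) < (ℓ:ℤ)-(r:ℤ) := by
    have : r + 1 ≤ ℓ := hℓ1
    omega
  have h2rl : (0:ℤ) ≤ 2*(r:ℤ)-(ℓ:ℤ) := by omega
  have hDFpos : (0:ℤ) < (Nat.descFactorial (m-1) (r-1) : ℤ) := by
    have : 0 < Nat.descFactorial (m-1) (r-1) := Nat.pos_of_ne_zero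
      (fun hz => by have := Nat.descFactorial_eq_zero_iff_lt.mp hz; omega)
    exact_mod_cast this
  -- step lemma
  have step : ∀ j : ℕ, r - 1 ≤ j → j + 2 ≤ m → h j < h (j+1) := by
    intro j h1 h2
    rw [hh, hh]
    have e1 : Nat.descFactorial (j+1) (r-1) = (j+1) * Nat.descFactorial j (r-2) := by
      rw [show r-1 = (r-2)+1 by omega]
      exact Nat.succ_descFactorial_succ j (r-2)
    have e2 : Nat.descFactorial j (r-1) = (j - (r-2)) * Nat.descFactorial j (r-2) := by
      rw [show r-1 = (r-2)+1 by omega, Nat.descFactorial_succ]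
    rw [e1, e2]
    have hEpos : (0:ℤ) < (Nat.descFactorial j (r-2) : ℤ) := by
      have : 0 < Nat.descFactorial j (r-2) := Nat.pos_of_ne_zero
        (fun hz => by have := Nat.descFactorial_eq_zero_iff_lt.mp hz; omega)
      exact_mod_cast this
    have hcj : ((j - (r-2) : ℕ) : ℤ) = (j:ℤ) - (r:ℤ) + 2 := by omega
    push_cast [hcj]
    have hj1 : (r:ℤ) - 1 ≤ (j:ℤ) := by omega
    have hj2 : (j:ℤ) + 2 ≤ (m:ℤ) := by exact_mod_cast h2
    have t1 : (0:ℤ) ≤ ((ℓ:ℤ)-(r:ℤ))*((r:ℤ)-1)*((m:ℤ)-(j:ℤ)-2) :=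
      mul_nonneg (mul_nonneg (by omega) (by omega)) (by omega)
    have t2 : (0:ℤ) ≤ ((ℓ:ℤ)-(r:ℤ))*(2*(r:ℤ)-(ℓ:ℤ)) := mul_nonneg (by omega) h2rl
    have t3 : (0:ℤ) ≤ ((ℓ:ℤ)-(r:ℤ))*((m:ℤ)-(j:ℤ)-2) := mul_nonneg (by omega) (by omega)
    have hE : (0:ℤ) < ((r:ℤ)-1)*(2*(r:ℤ)-(ℓ:ℤ)+2*((m:ℤ)-(j:ℤ))*((ℓ:ℤ)-(r:ℤ)))
        - 2*((ℓ:ℤ)-(r:ℤ))*((j:ℤ)+1) := by linarith [key2, t1, t2, t3]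
    nlinarith [mul_pos hEpos hE]
  -- chain lemma
  have chain : ∀ k : ℕ, ∀ j : ℕ, r - 1 ≤ j → j + k = m - 1 → h j ≤ h (m-1) := by
    intro k
    induction k with
    | zero =>
      intro j h1 h2
      have : j = m - 1 := by omega
      rw [this]
    | succ k ih =>
      intro j h1 h2
      have hs := step j h1 (by omega)
      have := ih (j+1) (by omega) (by omega)
      linarith
  -- main case split
  intro q hq hne
  by_cases hq1 : q + 1 ≤ r - 1
  · -- q < r - 1 : h q = 0 < h (m-1)
    have hz : Nat.descFactorial q (r-1) = 0 :=
      Nat.descFactorial_eq_zero_iff_lt.mpr (by omega)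
    rw [hh q, hz, hhm1]
    simp only [Nat.cast_zero, zero_mul]
    positivity
  · by_cases hqm : q = m
    · -- q = m
      rw [hqm, hh, hhm1]
      have e1 : Nat.descFactorial m (r-1) = m * Nat.descFactorial (m-1) (r-2) := by
        rw [show r-1 = (r-2)+1 by omega, show m = (m-1)+1 by omega]
        exact Nat.succ_descFactorial_succ (m-1) (r-2)
      have e2 : Nat.descFactorial (m-1) (r-1) = (m-1-(r-2)) * Nat.descFactorial (m-1) (r-2) := by
        rw [show r-1 = (r-2)+1 by omega, Nat.descFactorial_succ]
      rw [e1, e2]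
      have hEpos : (0:ℤ) < (Nat.descFactorial (m-1) (r-2) : ℤ) := by
        have : 0 < Nat.descFactorial (m-1) (r-2) := Nat.pos_of_ne_zero
          (fun hz => by have := Nat.descFactorial_eq_zero_iff_lt.mp hz; omega)
        exact_mod_cast this
      have hcm : ((m-1-(r-2) : ℕ) : ℤ) = (m:ℤ) - (r:ℤ) + 1 := by omega
      push_cast [hcm]
      nlinarith [mul_pos hEpos (show (0:ℤ) < ((m:ℤ)-(r:ℤ)+1)*(ℓ:ℤ) - (m:ℤ)*(2*(r:ℤ)-(ℓ:ℤ))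
        from by linarith [key1])]
    · -- r - 1 ≤ q ≤ m - 2
      have hq2 : q + 2 ≤ m := by omega
      have hstep := step q (by omega) hq2
      have hchain := chain (m - 1 - (q+1)) (q+1) (by omega) (by omega)
      linarith
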